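/- Consider the linear-plus-bounded-perturbation system ẋ = Ax + G(x)x with A, G as in the ILOS error dynamics, under the Lyapunov condition λ_min(Γ) > (p12 + sqrt(p12²+p22²))/Δ_LOS where Γ = -(AᵀP+PA). Then V(x) = xᵀPx satisfies V̇(x) ≤ -(λ_min(Γ) - (p12 + sqrt(p12²+p22²))/Δ_LOS)|x|² for all x, and hence the origin is globally exponentially stable. -/

import Mathlib

open Matrix Real

private theorem quad_eig_bound (p12 p22 a b : ℝ) :
    2*(p12*a^2 + p22*a*b) ≤ (p12 + Real.sqrt (p12^2+p22^2)) * (a^2+b^2) := by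
  set r := Real.sqrt (p12^2+p22^2) with hr
  have h1 : r^2 = p12^2+p22^2 := Real.sq_sqrt (by positivity)
  have h2 : |p12| ≤ r := by
    rw [hr, ← Real.sqrt_sq_eq_abs]; exact Real.sqrt_le_sqrt (by nlinarith)
  have h5 := le_abs_self p12
  have h0 : 0 ≤ r := le_trans (abs_nonneg p12) h2
  have h6 : 0 ≤ r - p12 := by linarith
  have key : 0 ≤ (r-p12)*((p12+r)*(a^2+b^2) - 2*(p12*a^2+p22*a*b)) := by
    nlinarith [sq_nonneg ((r-p12)*a - p22*b), sq_nonneg b]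
  rcases eq_or_lt_of_le h6 with h|h
  · have hsq : p22^2 = 0 := by nlinarith
    have hp22 : p22 = 0 := by nlinarith [sq_nonneg p22]
    have hpr : p12 = r := by linarith
    rw [hp22, hpr]
    nlinarith [mul_nonneg h0 (sq_nonneg b)]
  · nlinarith [key, h]

private theorem quad_lower (p11 p12 p22 a b : ℝ) (h1 : 0 < p11) (h2 : 0 < p22)
    (hd : 0 < p11*p22 - p12^2) :
    (p11*p22 - p12^2)/(p11+p22+|p12|) * (a^2+b^2) ≤ p11*a^2 + 2*p12*a*b + p22*b^2 := by
  have ht0 : 0 ≤ |p12| := abs_nonneg p12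
  have ht2 : |p12|^2 = p12^2 := sq_abs p12
  have hM0 : 0 < p11+p22+|p12| := by linarith
  rw [div_mul_eq_mul_div, div_le_iff₀ hM0]
  have h8 : 0 < (p11+p22+|p12|)*p11-(p11*p22-p12^2) := by nlinarith
  have keyeq : ((p11+p22+|p12|)*p11-(p11*p22-p12^2)) * ((p11+p22+|p12|)*(p11*a^2+2*p12*a*b+p22*b^2) - (p11*p22-p12^2)*(a^2+b^2)) = (((p11+p22+|p12|)*p11-(p11*p22-p12^2))*a + (p11+p22+|p12|)*p12*b)^2 + ((p11*p22-p12^2)*((p11+p22+|p12|)*|p12|) + (p11*p22-p12^2)^2)*b^2 := by ring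
  have key : 0 ≤ ((p11+p22+|p12|)*p11-(p11*p22-p12^2)) * ((p11+p22+|p12|)*(p11*a^2+2*p12*a*b+p22*b^2) - (p11*p22-p12^2)*(a^2+b^2)) := by
    rw [keyeq]
    have := sq_nonneg (((p11+p22+|p12|)*p11-(p11*p22-p12^2))*a + (p11+p22+|p12|)*p12*b)
    have h9 : 0 ≤ (p11*p22-p12^2)*((p11+p22+|p12|)*|p12|) := by positivity
    nlinarith [sq_nonneg b, sq_nonneg (p11*p22-p12^2), mul_nonneg (add_nonneg h9 (sq_nonneg (p11*p22-p12^2))) (sq_nonneg b)]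
  nlinarith [key, h8]

private theorem quad_upper (p11 p12 p22 a b : ℝ) (h1 : 0 < p11) (h2 : 0 < p22) :
    p11*a^2 + 2*p12*a*b + p22*b^2 ≤ (p11+p22+|p12|) * (a^2+b^2) := by
  have h5 := le_abs_self p12
  have h6 := neg_abs_le p12
  have ht0 := abs_nonneg p12
  nlinarith [mul_nonneg ht0 (sq_nonneg (a-b)), mul_nonneg ht0 (sq_nonneg (a+b)),
    mul_nonneg h1.le (sq_nonneg b), mul_nonneg h2.le (sq_nonneg a)]

private theorem norm_sq_fin2 (x : EuclideanSpace ℝ (Fin 2)) : ‖x‖^2 = x 0^2 + x 1^2 := by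
  rw [EuclideanSpace.norm_eq, Real.sq_sqrt (by positivity)]
  simp [Fin.sum_univ_two, sq_abs]

set_option maxHeartbeats 1000000 in
/-- For the ILOS error dynamics `ẋ = Ax + G(x)x`, under the Lyapunov condition
`λ_min(Γ) > (p12 + √(p12²+p22²))/Δ_LOS` with `Γ = -(AᵀP+PA)`, the Lyapunov function
`V(x) = xᵀPx` satisfies `V̇(x) ≤ -(γ - (p12+√(p12²+p22²))/Δ_LOS)|x|²` for
all `x`, and the origin is globally exponentially stable. -/
theorem ILOS_Vdot_bound_GES (αd kd σ0 Δ : ℝ)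
    (hα : 0 < αd) (hk : 0 < kd) (hσ : 0 < σ0) (hΔ : 0 < Δ)
    (A H B : Matrix (Fin 2) (Fin 2) ℝ)
    (hA : A = (-αd) • !![1, σ0; 0, kd / αd])
    (hH : H = !![1, σ0; σ0, σ0 ^ 2]) (hB : B = !![0, 0; 1, 0])
    (p11 p12 p22 : ℝ) (P : Matrix (Fin 2) (Fin 2) ℝ)
    (hP : P = !![p11, p12; p12, p22]) (hPpos : P.PosDef)
    (Γ : Matrix (Fin 2) (Fin 2) ℝ) (hΓ : Γ = -(Aᵀ * P + P * A)) (hΓpos : Γ.PosDef)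
    (γ : ℝ)
    (hγmin : ∀ x : EuclideanSpace ℝ (Fin 2), γ * ‖x‖ ^ 2 ≤ dotProduct x (Γ.mulVec x))
    (hγeig : ∃ v : Fin 2 → ℝ, v ≠ 0 ∧ Γ.mulVec v = γ • v)
    (hγ : γ > (p12 + Real.sqrt (p12 ^ 2 + p22 ^ 2)) / Δ)
    (f : EuclideanSpace ℝ (Fin 2) → EuclideanSpace ℝ (Fin 2))
    (hf : ∀ x : EuclideanSpace ℝ (Fin 2), f x = A.mulVec x +
      (Δ / (dotProduct x (H.mulVec x) + Δ ^ 2)) • B.mulVec x) :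
    (∀ x : EuclideanSpace ℝ (Fin 2),
      2 * dotProduct x (P.mulVec (f x)) ≤
        -(γ - (p12 + Real.sqrt (p12 ^ 2 + p22 ^ 2)) / Δ) * ‖x‖ ^ 2) ∧
    ∃ k > 0, ∃ lam > 0, ∀ x : ℝ → EuclideanSpace ℝ (Fin 2),
      (∀ t, HasDerivAt x (f (x t)) t) →
      ∀ t ≥ 0, ‖x t‖ ≤ k * ‖x 0‖ * Real.exp (-lam * t) := by
  -- Part 1: the derivative bound
  have part1 : ∀ x : EuclideanSpace ℝ (Fin 2),
      2 * dotProduct x (P.mulVec (f x)) ≤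
        -(γ - (p12 + Real.sqrt (p12 ^ 2 + p22 ^ 2)) / Δ) * ‖x‖ ^ 2 := by
    intro x
    set s := p12 + Real.sqrt (p12 ^ 2 + p22 ^ 2) with hs
    have hs0 : 0 ≤ s := by
      have h2 : |p12| ≤ Real.sqrt (p12^2+p22^2) := by
        rw [← Real.sqrt_sq_eq_abs]; exact Real.sqrt_le_sqrt (by nlinarith)
      have := neg_abs_le p12; simp only [hs]; linarith
    have hq : dotProduct x (H.mulVec x) = (x 0 + σ0 * x 1)^2 := by
      rw [hH]; simp [Matrix.mulVec, dotProduct, Fin.sum_univ_two]; ring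
    set q := dotProduct x (H.mulVec x) with hqdef
    have hq0 : 0 ≤ q := hq ▸ sq_nonneg _
    have hden : 0 < q + Δ^2 := by positivity
    set c := Δ / (q + Δ^2) with hc
    have hc0 : 0 ≤ c := by positivity
    have hc1 : c ≤ 1/Δ := by
      rw [hc, div_le_div_iff₀ hden hΔ]; nlinarith
    have hexp : dotProduct x (P.mulVec (f x)) =
        dotProduct x (P.mulVec (A.mulVec x)) +
          c * dotProduct x (P.mulVec (B.mulVec x)) := by
      rw [hf]
      rw [Matrix.mulVec_add, Matrix.mulVec_smul, dotProduct_add,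
        dotProduct_smul, smul_eq_mul]
    have hAT : Aᵀ = (-αd) • !![1, 0; σ0, kd / αd] := by
      rw [hA]; ext i j; fin_cases i <;> fin_cases j <;> simp
    have hAP : dotProduct x (Γ.mulVec x)
        = -(2 * dotProduct x (P.mulVec (A.mulVec x))) := by
      rw [hΓ, hAT, hA, hP]
      simp [Matrix.mulVec, dotProduct, Fin.sum_univ_two, Matrix.mul_apply,
        Matrix.smul_apply]
      ring
    have hBP : dotProduct x (P.mulVec (B.mulVec x))
        = p12 * (x 0)^2 + p22 * (x 0) * (x 1) := by
      rw [hB, hP]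
      simp [Matrix.mulVec, dotProduct, Fin.sum_univ_two]
      ring
    have h1 : 2 * dotProduct x (P.mulVec (A.mulVec x)) ≤ -γ * ‖x‖^2 := by
      have := hγmin x; rw [hAP] at this; linarith
    have h2 : 2 * (c * dotProduct x (P.mulVec (B.mulVec x))) ≤ s/Δ * ‖x‖^2 := by
      have hb := quad_eig_bound p12 p22 (x 0) (x 1)
      rw [hBP, norm_sq_fin2]
      calc 2 * (c * (p12 * (x 0)^2 + p22 * (x 0) * (x 1)))
          = c * (2 * (p12 * (x 0)^2 + p22 * (x 0) * (x 1))) := by ring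
        _ ≤ c * (s * (x 0^2 + x 1^2)) := mul_le_mul_of_nonneg_left hb hc0
        _ ≤ (1/Δ) * (s * (x 0^2 + x 1^2)) :=
            mul_le_mul_of_nonneg_right hc1 (by positivity)
        _ = s/Δ * (x 0^2 + x 1^2) := by ring
    rw [hexp]
    linarith [h1, h2]
  refine ⟨part1, ?_⟩
  -- Part 2: global exponential stability
  -- extract positivity facts about P
  have hPe1 := hPpos.dotProduct_mulVec_pos (x := ![1,0]) (by intro h; have := congrFun h 0; simp at this)
  have hPe2 := hPpos.dotProduct_mulVec_pos (x := ![0,1]) (by intro h; have := congrFun h 1; simp at this)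
  have hPd := hPpos.det_pos
  rw [hP] at hPe1 hPe2 hPd
  simp [Matrix.mulVec, dotProduct, Fin.sum_univ_two, Matrix.det_fin_two] at hPe1 hPe2 hPd
  have h11 : 0 < p11 := hPe1
  have h22 : 0 < p22 := hPe2
  have hdet : 0 < p11*p22 - p12^2 := by nlinarith
  set M := p11+p22+|p12| with hMdef
  have hM : 0 < M := by have := abs_nonneg p12; simp only [hMdef]; linarith
  set m := (p11*p22 - p12^2)/M with hmdef
  have hm : 0 < m := by positivity
  set μ := γ - (p12 + Real.sqrt (p12 ^ 2 + p22 ^ 2)) / Δ with hμdef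
  have hμ : 0 < μ := by simp only [hμdef]; linarith
  have hlow : ∀ a b : ℝ, m * (a^2+b^2) ≤ p11*a^2 + 2*p12*a*b + p22*b^2 := fun a b =>
    quad_lower p11 p12 p22 a b h11 h22 hdet
  have hup : ∀ a b : ℝ, p11*a^2 + 2*p12*a*b + p22*b^2 ≤ M * (a^2+b^2) := fun a b =>
    quad_upper p11 p12 p22 a b h11 h22
  refine ⟨Real.sqrt (M/m), Real.sqrt_pos.2 (by positivity), μ/M/2, by positivity, ?_⟩
  intro x hx t ht
  set lam0 := μ/M with hlam0
  have hlam0pos : 0 < lam0 := by positivity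
  have hcoord : ∀ (i : Fin 2) (u : ℝ), HasDerivAt (fun r => x r i) (f (x u) i) u := by
    intro i u
    simpa [Function.comp_def] using (EuclideanSpace.proj (𝕜 := ℝ) i).hasFDerivAt.comp_hasDerivAt u (hx u)
  set g : ℝ → ℝ := fun r => p11 * (x r 0 * x r 0) + 2*p12 * (x r 0 * x r 1)
    + p22 * (x r 1 * x r 1) with hg
  have hgderiv : ∀ u : ℝ, HasDerivAt g (2 * dotProduct (x u) (P.mulVec (f (x u)))) u := by
    intro u
    have h0 := hcoord 0 u
    have h1 := hcoord 1 u
    have base := (((h0.mul h0).const_mul p11).add ((h0.mul h1).const_mul (2*p12))).add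
      ((h1.mul h1).const_mul p22)
    have hEq : p11 * (f (x u) 0 * x u 0 + x u 0 * f (x u) 0)
        + 2*p12 * (f (x u) 0 * x u 1 + x u 0 * f (x u) 1)
        + p22 * (f (x u) 1 * x u 1 + x u 1 * f (x u) 1)
        = 2 * dotProduct (x u) (P.mulVec (f (x u))) := by
      rw [hP]; simp [Matrix.mulVec, dotProduct, Fin.sum_univ_two]; ring
    exact hEq ▸ base
  have hglow : ∀ u, m * ‖x u‖^2 ≤ g u := by
    intro u; rw [norm_sq_fin2]; have := hlow (x u 0) (x u 1); simp only [hg]; nlinarith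
  have hgup : ∀ u, g u ≤ M * ‖x u‖^2 := by
    intro u; rw [norm_sq_fin2]; have := hup (x u 0) (x u 1); simp only [hg]; nlinarith
  set h : ℝ → ℝ := fun r => g r * Real.exp (lam0 * r) with hh
  have hhderiv : ∀ u, HasDerivAt h
      (2 * dotProduct (x u) (P.mulVec (f (x u))) * Real.exp (lam0 * u)
        + g u * (Real.exp (lam0 * u) * lam0)) u := by
    intro u
    have he : HasDerivAt (fun r => Real.exp (lam0 * r)) (Real.exp (lam0 * u) * lam0) u := by
      simpa [mul_comm] using ((hasDerivAt_id u).const_mul lam0).exp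
    exact (hgderiv u).mul he
  have hderiv_nonpos : ∀ u, deriv h u ≤ 0 := by
    intro u
    rw [(hhderiv u).deriv]
    have hb := part1 (x u)
    have hgu := hgup u
    have hepos := Real.exp_pos (lam0 * u)
    have hstep : 2 * dotProduct (x u) (P.mulVec (f (x u))) + g u * lam0 ≤ 0 := by
      have hmul : lam0 * g u ≤ lam0 * (M * ‖x u‖^2) :=
        mul_le_mul_of_nonneg_left hgu hlam0pos.le
      have hMl : lam0 * M = μ := by rw [hlam0, div_mul_cancel₀ μ hM.ne']
      nlinarith
    nlinarith [hepos, mul_le_mul_of_nonneg_right hstep hepos.le]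
  have hanti : Antitone h :=
    antitone_of_deriv_nonpos (fun u => (hhderiv u).differentiableAt) hderiv_nonpos
  have hht := hanti ht
  have hh0 : h 0 = g 0 := by simp [hh]
  have key : m * ‖x t‖^2 * Real.exp (lam0 * t) ≤ M * ‖x 0‖^2 := by
    have h1 := hglow t
    have h2 := hgup 0
    have hepos := Real.exp_pos (lam0 * t)
    have hcmp := hht
    rw [hh0] at hcmp
    simp only [hh] at hcmp
    nlinarith [mul_le_mul_of_nonneg_right h1 hepos.le]
  have hsq : ‖x t‖^2 ≤ (Real.sqrt (M/m) * ‖x 0‖ * Real.exp (-(μ/M/2) * t))^2 := by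
    have hexpsq : (Real.exp (-(μ/M/2) * t))^2 = Real.exp (-(lam0 * t)) := by
      rw [← Real.exp_nat_mul]
      congr 1; rw [hlam0]; ring
    have hksq : (Real.sqrt (M/m))^2 = M/m := Real.sq_sqrt (by positivity)
    have hepos := Real.exp_pos (lam0 * t)
    rw [mul_pow, mul_pow, hexpsq, hksq, Real.exp_neg]
    have h2 : ‖x t‖^2 * (m * Real.exp (lam0*t)) ≤ M*‖x 0‖^2 := by nlinarith [key]
    have h3 := (le_div_iff₀ (by positivity : (0:ℝ) < m * Real.exp (lam0*t))).mpr h2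
    calc ‖x t‖^2 ≤ M*‖x 0‖^2 / (m * Real.exp (lam0*t)) := h3
      _ = M/m * ‖x 0‖^2 * (Real.exp (lam0*t))⁻¹ := by
          field_simp
  calc ‖x t‖ = Real.sqrt (‖x t‖^2) := (Real.sqrt_sq (norm_nonneg _)).symm
    _ ≤ Real.sqrt ((Real.sqrt (M/m) * ‖x 0‖ * Real.exp (-(μ/M/2) * t))^2) :=
        Real.sqrt_le_sqrt hsq
    _ = Real.sqrt (M/m) * ‖x 0‖ * Real.exp (-(μ/M/2) * t) := Real.sqrt_sq (by positivity)
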